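/- Given constants 0 < w̲ ≤ w̄, 0 < X_A ≤ X_B and α ∈ [0,1], there exists C*₀ > 0 (depending only on these constants) such that for every ε ∈ (0,1], every integer n ≥ C*₀ max{1, ln(1/ε)}, every Blotto data with n battlefields satisfying Assumption (A0), every positive solution γ* of Equation (2), and every pure strategy x^A of player A (x^A_i ≥ 0, Σ_i x^A_i ≤ X_A): if Σ_{i=1}^n v^A_i P(B^n_i ≤ x^A_i) ≤ Σ_{i=1}^n v^A_i E[P(B^n_i ≤ x) evaluated at x = A^n_i] + ε/2 (i.e. Σ_i v^A_i F_{B^n_i}(x^A_i) ≤ Σ_i v^A_i E[F_{B^n_i}(A^n_i)] + ε/2, where F_{B^n_i}(x) := P(B^n_i ≤ x)), then Π_A(x^A, IU_B) ≤ Π_A(IU_A, IU_B) + ε W_A. -/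

import Mathlib

open Finset MeasureTheory

/-- Normalized battlefield values: `nv w i = w i / ∑_j w j`. -/
noncomputable def nv {n : ℕ} (w : Fin n → ℝ) (i : Fin n) : ℝ := w i / ∑ j, w j

/-- The set `Ω_A(γ) = {i : v^A_i / v^B_i > γ}`. -/
noncomputable def OmegaA {n : ℕ} (wA wB : Fin n → ℝ) (γ : ℝ) : Finset (Fin n) :=
  Finset.univ.filter fun i => γ < nv wA i / nv wB i

/-- Equation (2). -/
def Eq2 {n : ℕ} (XA XB : ℝ) (wA wB : Fin n → ℝ) (γ : ℝ) : Prop :=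
  XB * γ / XA =
    (γ ^ 2 * ∑ i ∈ OmegaA wA wB γ, (nv wB i) ^ 2 / nv wA i
        + ∑ i ∈ (OmegaA wA wB γ)ᶜ, nv wA i) /
    (∑ i ∈ OmegaA wA wB γ, nv wB i
        + (γ ^ 2)⁻¹ * ∑ i ∈ (OmegaA wA wB γ)ᶜ, (nv wA i) ^ 2 / nv wB i)

/-- The multiplier λ*_A associated with a solution γ of Equation (2). -/
noncomputable def lamA {n : ℕ} (XB : ℝ) (wA wB : Fin n → ℝ) (γ : ℝ) : ℝ :=
  γ ^ 2 / (2 * XB) * ∑ i ∈ OmegaA wA wB γ, (nv wB i) ^ 2 / nv wA i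
    + 1 / (2 * XB) * ∑ i ∈ (OmegaA wA wB γ)ᶜ, nv wA i

/-- The multiplier λ*_B associated with a solution γ of Equation (2). -/
noncomputable def lamB {n : ℕ} (XA : ℝ) (wA wB : Fin n → ℝ) (γ : ℝ) : ℝ :=
  1 / (2 * XA) * ∑ i ∈ OmegaA wA wB γ, nv wB i
    + 1 / (2 * γ ^ 2 * XA) * ∑ i ∈ (OmegaA wA wB γ)ᶜ, (nv wA i) ^ 2 / nv wB i

/-- The uniform-type CDF `F_{A*_i}`. -/
noncomputable def FAstar {n : ℕ} (XA XB : ℝ) (wA wB : Fin n → ℝ) (γ : ℝ) (i : Fin n)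
    (x : ℝ) : ℝ :=
  if x < 0 then 0
  else if i ∈ OmegaA wA wB γ then
    min (x * lamB XA wA wB γ / nv wB i) 1
  else
    min (1 - nv wA i * lamB XA wA wB γ / (nv wB i * lamA XB wA wB γ)
          + x * lamB XA wA wB γ / nv wB i) 1

/-- The uniform-type CDF `F_{B*_i}`. -/
noncomputable def FBstar {n : ℕ} (XA XB : ℝ) (wA wB : Fin n → ℝ) (γ : ℝ) (i : Fin n)
    (x : ℝ) : ℝ :=
  if x < 0 then 0
  else if i ∈ OmegaA wA wB γ then
    min (1 - nv wB i * lamA XB wA wB γ / (nv wA i * lamB XA wA wB γ)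
          + x * lamA XB wA wB γ / nv wA i) 1
  else
    min (x * lamA XB wA wB γ / nv wA i) 1

/-- The IU^γ* allocation to battlefield `i`: the draw `a i` normalized by the total
draw and scaled by the budget `X` (and `0` if the total draw is `0`). -/
noncomputable def IUalloc {n : ℕ} {Ω : Type*} (X : ℝ) (a : Fin n → Ω → ℝ)
    (i : Fin n) (ω : Ω) : ℝ :=
  if 0 < ∑ j, a j ω then a i ω * X / ∑ j, a j ω else 0


section Aux

variable {Ω : Type*} [MeasurableSpace Ω] {P : MeasureTheory.Measure Ω}

lemma aux_abs_min_sub (p q : ℝ) : |min p 1 - min q 1| ≤ |p - q| :=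
  (abs_min_sub_min_le_max p 1 q 1).trans (by simp)

lemma null_of_ae_imp {p : Ω → Prop} {s : Set Ω} (hp : ∀ᵐ ω ∂P, p ω)
    (h : ∀ ω, p ω → ω ∉ s) : P s = 0 :=
  measure_mono_null (fun ω hω hpω => h ω hpω hω) (by rwa [MeasureTheory.ae_iff] at hp)

lemma ae_nonneg_of_cdf (ξ : Ω → ℝ) (F : ℝ → ℝ)
    (hcdf : ∀ x, P {ω | ξ ω ≤ x} = ENNReal.ofReal (F x))
    (hFneg : ∀ x, x < 0 → F x = 0) : ∀ᵐ ω ∂P, 0 ≤ ξ ω := by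
  have h : P {ω | ξ ω < 0} = 0 := by
    have hsub : {ω | ξ ω < 0} ⊆ ⋃ k : ℕ, {ω | ξ ω ≤ -(1 / (k + 1))} := by
      intro ω hω
      simp only [Set.mem_setOf_eq] at hω
      obtain ⟨k, hk⟩ := exists_nat_one_div_lt (neg_pos.mpr hω)
      exact Set.mem_iUnion.mpr ⟨k, by simp only [Set.mem_setOf_eq]; linarith⟩
    refine measure_mono_null hsub (measure_iUnion_null fun k => ?_)
    have hneg : -(1 / ((k : ℝ) + 1)) < 0 := by
      have : (0:ℝ) < 1 / ((k:ℝ)+1) := by positivity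
      linarith
    rw [hcdf, hFneg _ hneg, ENNReal.ofReal_zero]
  rw [MeasureTheory.ae_iff]
  convert h using 2
  ext ω; simp [not_le]

lemma ae_pos_of_cdf (ξ : Ω → ℝ) (F : ℝ → ℝ)
    (hcdf : ∀ x, P {ω | ξ ω ≤ x} = ENNReal.ofReal (F x))
    (h0 : F 0 = 0) : ∀ᵐ ω ∂P, 0 < ξ ω := by
  rw [MeasureTheory.ae_iff]
  have := hcdf 0
  rw [h0, ENNReal.ofReal_zero] at this
  convert this using 2
  ext ω; simp [not_lt]

lemma atom_zero_of_lipschitz_cdf [IsProbabilityMeasure P] (ξ : Ω → ℝ) (hξ : Measurable ξ)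
    (F : ℝ → ℝ) (hcdf : ∀ x, P {ω | ξ ω ≤ x} = ENNReal.ofReal (F x))
    (L : ℝ) (hL : 0 ≤ L)
    (hlip : ∀ x y, 0 < x → 0 < y → |F x - F y| ≤ L * |x - y|)
    (t : ℝ) (ht : 0 < t) : P {ω | ξ ω = t} = 0 := by
  have hmeas : MeasurableSet {ω | ξ ω = t} := hξ (measurableSet_singleton t)
  have hfin : P {ω | ξ ω = t} ≠ ⊤ := measure_ne_top _ _
  have key : ∀ δ : ℝ, 0 < δ → δ ≤ t / 2 → (P {ω | ξ ω = t}).toReal ≤ L * δ := by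
    intro δ hδ hδ2
    have hdisj : Disjoint {ω | ξ ω ≤ t - δ} {ω | ξ ω = t} := by
      rw [Set.disjoint_left]; intro ω h1 h2
      simp only [Set.mem_setOf_eq] at h1 h2
      rw [h2] at h1; linarith
    have hunion : P {ω | ξ ω ≤ t - δ} + P {ω | ξ ω = t} ≤ P {ω | ξ ω ≤ t} := by
      rw [← measure_union hdisj hmeas]
      apply measure_mono
      rintro ω (h | h) <;> simp only [Set.mem_setOf_eq] at * <;> [linarith; exact h.le]
    rw [hcdf, hcdf] at hunion
    have h1 : (ENNReal.ofReal (F (t - δ))).toReal + (P {ω | ξ ω = t}).toReal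
        ≤ (ENNReal.ofReal (F t)).toReal := by
      rw [← ENNReal.toReal_add ENNReal.ofReal_ne_top hfin]
      exact ENNReal.toReal_mono ENNReal.ofReal_ne_top hunion
    rw [ENNReal.toReal_ofReal', ENNReal.toReal_ofReal'] at h1
    have h2 : max (F t) 0 - max (F (t - δ)) 0 ≤ |F t - F (t - δ)| :=
      (le_abs_self _).trans (abs_max_sub_max_le_abs _ _ _)
    have h3 : |F t - F (t - δ)| ≤ L * δ := by
      have := hlip t (t - δ) ht (by linarith)
      have habs : |t - (t - δ)| = δ := by rw [show t - (t - δ) = δ by ring, abs_of_pos hδ]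
      rwa [habs] at this
    linarith
  have h0 : (P {ω | ξ ω = t}).toReal ≤ 0 := by
    by_contra hcon
    push_neg at hcon
    set r := (P {ω | ξ ω = t}).toReal with hr
    have hδpos : 0 < min (t / 2) (r / (L + 1)) := by
      apply lt_min (by linarith)
      positivity
    have h4 := key _ hδpos (min_le_left _ _)
    have h5 : L * min (t / 2) (r / (L + 1)) ≤ L * (r / (L + 1)) :=
      mul_le_mul_of_nonneg_left (min_le_right _ _) hL
    have h6 : L * (r / (L + 1)) < r := by
      rw [mul_div_assoc']
      rw [div_lt_iff₀ (by linarith)]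
      nlinarith
    linarith
  have := le_antisymm h0 ENNReal.toReal_nonneg
  exact ((ENNReal.toReal_eq_zero_iff _).mp this).resolve_right hfin

lemma prod_section [IsProbabilityMeasure P] (X Y : Ω → ℝ) (hX : Measurable X) (hY : Measurable Y)
    (hind : ProbabilityTheory.IndepFun Y X P) (s : Set (ℝ × ℝ)) (hs : MeasurableSet s) :
    P {ω | (Y ω, X ω) ∈ s} = ∫⁻ y, P {ω | (y, X ω) ∈ s} ∂(P.map Y) := by
  have hPX : IsProbabilityMeasure (P.map X) := Measure.isProbabilityMeasure_map hX.aemeasurable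
  have hPY : IsProbabilityMeasure (P.map Y) := Measure.isProbabilityMeasure_map hY.aemeasurable
  have hmap := (ProbabilityTheory.indepFun_iff_map_prod_eq_prod_map_map hY.aemeasurable
    hX.aemeasurable).mp hind
  have h1 : {ω | (Y ω, X ω) ∈ s} = (fun ω => (Y ω, X ω)) ⁻¹' s := rfl
  rw [h1, ← Measure.map_apply (hY.prodMk hX) hs, hmap, Measure.prod_apply hs]
  refine lintegral_congr fun y => ?_
  rw [Measure.map_apply hX (measurable_prodMk_left hs)]
  rfl

lemma indep_diag_zero [IsProbabilityMeasure P] (X Y : Ω → ℝ) (hX : Measurable X)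
    (hY : Measurable Y) (hind : ProbabilityTheory.IndepFun X Y P) (c : ℝ) (hc : c ≠ 0)
    (hatoms : ∀ t, t ≠ 0 → t ≠ c → P {ω | Y ω = t} = 0)
    (h0 : P {ω | X ω = 0} * P {ω | Y ω = 0} = 0)
    (hc0 : P {ω | X ω = c} * P {ω | Y ω = c} = 0) :
    P {ω | X ω = Y ω} = 0 := by
  have hs : MeasurableSet {p : ℝ × ℝ | p.2 = p.1} :=
    measurableSet_eq_fun measurable_snd measurable_fst
  have h1 : P {ω | X ω = Y ω} = ∫⁻ x, P {ω | Y ω = x} ∂(P.map X) := by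
    have h2 := prod_section (P := P) Y X hY hX hind {p | p.2 = p.1} hs
    have h3 : {ω | (X ω, Y ω) ∈ {p : ℝ × ℝ | p.2 = p.1}} = {ω | X ω = Y ω} := by
      ext ω; simp [eq_comm]
    have h4 : ∀ x : ℝ, {ω | (x, Y ω) ∈ {p : ℝ × ℝ | p.2 = p.1}} = {ω | Y ω = x} := by
      intro x; rfl
    rw [h3] at h2
    simp_rw [h4] at h2
    exact h2
  rw [h1]
  have hb : ∀ x : ℝ, P {ω | Y ω = x}
      ≤ Set.indicator ({0} : Set ℝ) (fun _ => P {ω | Y ω = 0}) x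
        + Set.indicator ({c} : Set ℝ) (fun _ => P {ω | Y ω = c}) x := by
    intro x
    by_cases hx0 : x = 0
    · subst hx0
      rw [Set.indicator_of_mem (Set.mem_singleton 0)]
      exact le_add_right le_rfl
    · by_cases hxc : x = c
      · rw [hxc, Set.indicator_of_mem (Set.mem_singleton c)]
        exact le_add_left le_rfl
      · rw [hatoms x hx0 hxc]
        exact zero_le
  have hle := lintegral_mono hb (μ := P.map X)
  have heval : ∫⁻ x, (Set.indicator ({0} : Set ℝ) (fun _ => P {ω | Y ω = 0}) x
        + Set.indicator ({c} : Set ℝ) (fun _ => P {ω | Y ω = c}) x) ∂(P.map X)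
      = P {ω | Y ω = 0} * (P.map X) ({0} : Set ℝ) + P {ω | Y ω = c} * (P.map X) ({c} : Set ℝ) := by
    rw [lintegral_add_left (measurable_const.indicator (measurableSet_singleton _)),
      lintegral_indicator_const (measurableSet_singleton _),
      lintegral_indicator_const (measurableSet_singleton _)]
  have hmap0 : (P.map X) ({0} : Set ℝ) = P {ω | X ω = 0} := by
    rw [Measure.map_apply hX (measurableSet_singleton _)]; rfl
  have hmapc : (P.map X) ({c} : Set ℝ) = P {ω | X ω = c} := by
    rw [Measure.map_apply hX (measurableSet_singleton _)]; rfl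
  rw [heval, hmap0, hmapc, mul_comm, h0, mul_comm, hc0, add_zero] at hle
  exact le_antisymm hle zero_le

lemma IUalloc_measurable {n : ℕ} (X : ℝ) (a : Fin n → Ω → ℝ) (ha : ∀ i, Measurable (a i))
    (i : Fin n) : Measurable (IUalloc X a i) := by
  have hsum : Measurable fun ω => ∑ j, a j ω := Finset.measurable_sum _ fun j _ => ha j
  exact Measurable.ite (measurableSet_lt measurable_const hsum)
    (((ha i).mul_const X).div hsum) measurable_const

end Aux

section Aux2

variable {Ω : Type*} [MeasurableSpace Ω] {P : MeasureTheory.Measure Ω}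

lemma lin_lip (u c x y : ℝ) : |min (u + x * c) 1 - min (u + y * c) 1| ≤ |c| * |x - y| := by
  calc |min (u + x * c) 1 - min (u + y * c) 1| ≤ |(u + x * c) - (u + y * c)| :=
        aux_abs_min_sub _ _
    _ = |c| * |x - y| := by
        rw [show (u + x * c) - (u + y * c) = c * (x - y) by ring, abs_mul]

lemma null_of_null_of_ae_imp {s t : Set Ω} {p : Ω → Prop} (hp : ∀ᵐ ω ∂P, p ω)
    (h : ∀ ω, p ω → ω ∈ s → ω ∈ t) (ht : P t = 0) : P s = 0 := by
  have h1 : P (s \ t) = 0 := null_of_ae_imp hp (fun ω hω hmem => hmem.2 (h ω hω hmem.1))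
  have hsub : s ⊆ (s \ t) ∪ t := fun ω hω =>
    (em (ω ∈ t)).elim Or.inr fun hn => Or.inl ⟨hω, hn⟩
  exact measure_mono_null hsub (measure_union_null h1 ht)

end Aux2

set_option maxHeartbeats 2000000 in
/-- Sufficient condition (ignoring ties) for the approximate-equilibrium bound of player A. -/
theorem stmt12 (wlo whi XA XB α : ℝ) (hwlo : 0 < wlo) (hw : wlo ≤ whi)
    (hXA : 0 < XA) (hXAB : XA ≤ XB) (hα0 : 0 ≤ α) (hα1 : α ≤ 1) :
    ∃ C₀ : ℝ, 0 < C₀ ∧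
      ∀ ε : ℝ, 0 < ε → ε ≤ 1 →
      ∀ n : ℕ, 1 ≤ n → C₀ * max 1 (Real.log ε⁻¹) ≤ (n : ℝ) →
      ∀ (wA wB : Fin n → ℝ),
        (∀ i, wlo ≤ wA i ∧ wA i ≤ whi) → (∀ i, wlo ≤ wB i ∧ wB i ≤ whi) →
      ∀ γ : ℝ, 0 < γ → Eq2 XA XB wA wB γ →
      ∀ (Ω : Type) (_ : MeasurableSpace Ω) (P : Measure Ω), IsProbabilityMeasure P →
      ∀ (a b : Fin n → Ω → ℝ),
        (∀ i, Measurable (a i)) → (∀ i, Measurable (b i)) →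
        ProbabilityTheory.iIndepFun (Sum.elim a b) P →
        (∀ i x, P {ω | a i ω ≤ x} = ENNReal.ofReal (FAstar XA XB wA wB γ i x)) →
        (∀ i x, P {ω | b i ω ≤ x} = ENNReal.ofReal (FBstar XA XB wA wB γ i x)) →
      ∀ (xA : Fin n → ℝ), (∀ i, 0 ≤ xA i) → (∑ i, xA i ≤ XA) →
      (∑ i, nv wA i * (P {ω | IUalloc XB b i ω ≤ xA i}).toReal
          ≤ (∑ i, nv wA i *
              ∫ ω, (P {ω' | IUalloc XB b i ω' ≤ IUalloc XA a i ω}).toReal ∂P) + ε / 2) →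
      ∑ i, wA i * (α * (P {ω | IUalloc XB b i ω = xA i}).toReal
            + (P {ω | IUalloc XB b i ω < xA i}).toReal)
        ≤ (∑ i, wA i * (α * (P {ω | IUalloc XA a i ω = IUalloc XB b i ω}).toReal
            + (P {ω | IUalloc XB b i ω < IUalloc XA a i ω}).toReal))
          + ε * ∑ j, wA j := by
  classical
  refine ⟨2, by norm_num, ?_⟩
  intro ε hε hε1 n hn1 hnC wA wB hwA hwB γ hγ heq2 Ω mΩ P hP a b ha hb hindep hFa hFb
    xA hxA0 hxAsum hyp
  letI := mΩ
  haveI := hP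
  have hXB : 0 < XB := lt_of_lt_of_le hXA hXAB
  have hn2 : 2 ≤ n := by
    have h1 : (1:ℝ) ≤ max 1 (Real.log ε⁻¹) := le_max_left _ _
    have h2 : (2:ℝ) ≤ (n : ℝ) := le_trans (by nlinarith) hnC
    exact_mod_cast h2
  have hAm : ∀ i, Measurable (IUalloc XA a i) := IUalloc_measurable XA a ha
  have hBm : ∀ i, Measurable (IUalloc XB b i) := IUalloc_measurable XB b hb
  have hfmeas : ∀ j : Fin n ⊕ Fin n, Measurable (Sum.elim a b j) := by
    rintro (j | j)
    · exact ha j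
    · exact hb j
  -- a.e. nonnegativity of draws
  have haNN : ∀ᵐ ω ∂P, ∀ j, 0 ≤ a j ω :=
    ae_all_iff.mpr fun j => ae_nonneg_of_cdf (a j) _ (hFa j) (fun x hx => by simp [FAstar, hx])
  have hbNN : ∀ᵐ ω ∂P, ∀ j, 0 ≤ b j ω :=
    ae_all_iff.mpr fun j => ae_nonneg_of_cdf (b j) _ (hFb j) (fun x hx => by simp [FBstar, hx])
  -- a.e. positivity of draws in the appropriate regime
  have haPos : ∀ j, j ∈ OmegaA wA wB γ → ∀ᵐ ω ∂P, 0 < a j ω := fun j hj =>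
    ae_pos_of_cdf (a j) _ (hFa j) (by norm_num [FAstar, hj])
  have hbPos : ∀ j, j ∉ OmegaA wA wB γ → ∀ᵐ ω ∂P, 0 < b j ω := fun j hj =>
    ae_pos_of_cdf (b j) _ (hFb j) (by norm_num [FBstar, hj])
  -- no atoms at positive points
  have haAtom : ∀ (j : Fin n) (t : ℝ), 0 < t → P {ω | a j ω = t} = 0 := by
    intro j t ht
    refine atom_zero_of_lipschitz_cdf (a j) (ha j) _ (hFa j)
      |lamB XA wA wB γ / nv wB j| (abs_nonneg _) ?_ t ht
    intro x y hx hy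
    by_cases hj : j ∈ OmegaA wA wB γ
    · simpa [FAstar, hj, not_lt.mpr hx.le, not_lt.mpr hy.le, mul_div_assoc] using
        lin_lip 0 (lamB XA wA wB γ / nv wB j) x y
    · simpa [FAstar, hj, not_lt.mpr hx.le, not_lt.mpr hy.le, mul_div_assoc] using
        lin_lip (1 - nv wA j * lamB XA wA wB γ / (nv wB j * lamA XB wA wB γ))
          (lamB XA wA wB γ / nv wB j) x y
  have hbAtom : ∀ (j : Fin n) (t : ℝ), 0 < t → P {ω | b j ω = t} = 0 := by
    intro j t ht
    refine atom_zero_of_lipschitz_cdf (b j) (hb j) _ (hFb j)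
      |lamA XB wA wB γ / nv wA j| (abs_nonneg _) ?_ t ht
    intro x y hx hy
    by_cases hj : j ∈ OmegaA wA wB γ
    · simpa [FBstar, hj, not_lt.mpr hx.le, not_lt.mpr hy.le, mul_div_assoc] using
        lin_lip (1 - nv wB j * lamA XB wA wB γ / (nv wA j * lamB XA wA wB γ))
          (lamA XB wA wB γ / nv wA j) x y
    · simpa [FBstar, hj, not_lt.mpr hx.le, not_lt.mpr hy.le, mul_div_assoc] using
        lin_lip 0 (lamA XB wA wB γ / nv wA j) x y
  -- independence of b i from the sum of the others
  have hindSb : ∀ i : Fin n,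
      ProbabilityTheory.IndepFun (fun ω => ∑ j ∈ Finset.univ.erase i, b j ω) (b i) P := by
    intro i
    have hi : (Sum.inr i : Fin n ⊕ Fin n)
        ∉ (Finset.univ.erase i).image (Sum.inr : Fin n → Fin n ⊕ Fin n) := by simp
    have h1 := hindep.indepFun_finsetSum_of_notMem hfmeas hi
    have heq : (∑ j ∈ (Finset.univ.erase i).image (Sum.inr : Fin n → Fin n ⊕ Fin n),
        Sum.elim a b j) = fun ω => ∑ j ∈ Finset.univ.erase i, b j ω := by
      funext ω
      rw [Finset.sum_apply, Finset.sum_image (fun x _ y _ h => Sum.inr_injective h)]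
      simp
    rw [heq] at h1
    simpa using h1
  have hSbNN : ∀ i : Fin n, ∀ᵐ ω ∂P, 0 ≤ ∑ j ∈ Finset.univ.erase i, b j ω :=
    fun i => hbNN.mono fun ω hω => Finset.sum_nonneg fun j _ => hω j
  -- atoms of B i can only be at 0 or XB
  have hBatom : ∀ (i : Fin n) (t : ℝ), t ≠ 0 → t ≠ XB →
      P {ω | IUalloc XB b i ω = t} = 0 := by
    intro i t ht0 htB
    rcases lt_or_gt_of_ne ht0 with htneg | htpos
    · refine null_of_ae_imp hbNN fun ω hω hmem => ?_
      simp only [Set.mem_setOf_eq, IUalloc] at hmem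
      split_ifs at hmem with hS
      · have h1 : 0 ≤ b i ω * XB / ∑ j, b j ω :=
          div_nonneg (mul_nonneg (hω i) hXB.le) hS.le
        linarith [hmem ▸ h1]
      · linarith [hmem]
    · have hSmMeas : Measurable (fun ω => ∑ j ∈ Finset.univ.erase i, b j ω) :=
        Finset.measurable_sum _ fun j _ => hb j
      have hkey : P {ω | b i ω ≠ 0 ∧ b i ω * (XB - t) = t * ∑ j ∈ Finset.univ.erase i, b j ω}
          = 0 := by
        have hsmeas : MeasurableSet {p : ℝ × ℝ | p.2 ≠ 0 ∧ p.2 * (XB - t) = t * p.1} :=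
          ((measurableSet_eq_fun measurable_snd measurable_const).compl).inter
            (measurableSet_eq_fun (measurable_snd.mul_const _) (measurable_fst.const_mul t))
        have h2 := prod_section (P := P) (b i) (fun ω => ∑ j ∈ Finset.univ.erase i, b j ω)
          (hb i) hSmMeas (hindSb i) _ hsmeas
        rw [show {ω | ((fun ω => ∑ j ∈ Finset.univ.erase i, b j ω) ω, b i ω)
              ∈ {p : ℝ × ℝ | p.2 ≠ 0 ∧ p.2 * (XB - t) = t * p.1}}
            = {ω | b i ω ≠ 0 ∧ b i ω * (XB - t) = t * ∑ j ∈ Finset.univ.erase i, b j ω}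
          from rfl] at h2
        rw [h2]
        have hae : ∀ᵐ y ∂(P.map (fun ω => ∑ j ∈ Finset.univ.erase i, b j ω)), 0 ≤ y := by
          rw [ae_map_iff hSmMeas.aemeasurable measurableSet_Ici]
          exact hSbNN i
        refine (lintegral_congr_ae ?_).trans lintegral_zero
        refine hae.mono fun y hy => ?_
        have hXBt : XB - t ≠ 0 := sub_ne_zero.mpr (Ne.symm htB)
        have hsub2 : {ω | (y, b i ω) ∈ {p : ℝ × ℝ | p.2 ≠ 0 ∧ p.2 * (XB - t) = t * p.1}}
            ⊆ {ω | b i ω = t * y / (XB - t)} := by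
          intro ω hω
          obtain ⟨h1, h2⟩ := hω
          simp only [Set.mem_setOf_eq]
          rw [eq_div_iff hXBt]
          exact h2
        rcases lt_trichotomy (t * y / (XB - t)) 0 with hx | hx | hx
        · refine measure_mono_null hsub2 ?_
          have hle : P {ω | b i ω = t * y / (XB - t)} ≤ P {ω | b i ω ≤ t * y / (XB - t)} :=
            measure_mono fun ω h => le_of_eq h
          have : P {ω | b i ω ≤ t * y / (XB - t)} = 0 := by
            rw [hFb i _, show FBstar XA XB wA wB γ i (t * y / (XB - t)) = 0 from by
              simp [FBstar, hx], ENNReal.ofReal_zero]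
          exact le_antisymm (this ▸ hle) zero_le
        · refine measure_mono_null (fun ω hω => (?_ : ω ∈ (∅ : Set Ω))) measure_empty
          obtain ⟨h1, h2⟩ := hω
          refine absurd ?_ h1
          have := hsub2 ⟨h1, h2⟩
          simp only [Set.mem_setOf_eq] at this
          rw [this, hx]
        · exact measure_mono_null hsub2 (hbAtom i _ hx)
      refine null_of_null_of_ae_imp hbNN (fun ω hω hmem => ?_) hkey
      simp only [Set.mem_setOf_eq, IUalloc] at hmem ⊢
      split_ifs at hmem with hS
      · have hSne : (∑ j, b j ω) ≠ 0 := ne_of_gt hS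
        rw [div_eq_iff hSne] at hmem
        have h2 : b i ω + ∑ j ∈ Finset.univ.erase i, b j ω = ∑ j, b j ω :=
          Finset.add_sum_erase _ (fun j => b j ω) (Finset.mem_univ i)
        constructor
        · intro hbi
          rw [hbi, zero_mul] at hmem
          nlinarith
        · linear_combination hmem - t * h2
      · exact absurd hmem.symm ht0
  -- independence of A i and B i
  have hindAB : ∀ i : Fin n,
      ProbabilityTheory.IndepFun (IUalloc XA a i) (IUalloc XB b i) P := by
    intro i
    set S : Finset (Fin n ⊕ Fin n) := Finset.univ.image Sum.inl with hSdef
    set T : Finset (Fin n ⊕ Fin n) := Finset.univ.image Sum.inr with hTdef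
    have hdisj : Disjoint S T := by
      simp only [hSdef, hTdef, Finset.disjoint_left, Finset.mem_image]
      rintro x ⟨j, -, rfl⟩ ⟨k, -, hk⟩
      exact Sum.inl_ne_inr hk.symm
    have hbase := hindep.indepFun_finset S T hdisj hfmeas
    have hmemS : ∀ j : Fin n, (Sum.inl j : Fin n ⊕ Fin n) ∈ S := fun j => by
      simp [hSdef]
    have hmemT : ∀ j : Fin n, (Sum.inr j : Fin n ⊕ Fin n) ∈ T := fun j => by
      simp [hTdef]
    let gA : (S → ℝ) → ℝ := fun v =>
      if 0 < ∑ j : Fin n, v ⟨Sum.inl j, hmemS j⟩ then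
        v ⟨Sum.inl i, hmemS i⟩ * XA / ∑ j : Fin n, v ⟨Sum.inl j, hmemS j⟩ else 0
    let gB : (T → ℝ) → ℝ := fun v =>
      if 0 < ∑ j : Fin n, v ⟨Sum.inr j, hmemT j⟩ then
        v ⟨Sum.inr i, hmemT i⟩ * XB / ∑ j : Fin n, v ⟨Sum.inr j, hmemT j⟩ else 0
    have hsumS : Measurable fun v : S → ℝ => ∑ j : Fin n, v ⟨Sum.inl j, hmemS j⟩ :=
      Finset.measurable_sum _ fun j _ => measurable_pi_apply _
    have hsumT : Measurable fun v : T → ℝ => ∑ j : Fin n, v ⟨Sum.inr j, hmemT j⟩ :=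
      Finset.measurable_sum _ fun j _ => measurable_pi_apply _
    have hgA : Measurable gA :=
      Measurable.ite (measurableSet_lt measurable_const hsumS)
        (((measurable_pi_apply _).mul_const XA).div hsumS) measurable_const
    have hgB : Measurable gB :=
      Measurable.ite (measurableSet_lt measurable_const hsumT)
        (((measurable_pi_apply _).mul_const XB).div hsumT) measurable_const
    have key := hbase.comp hgA hgB
    have hAeq : gA ∘ (fun ω (j : S) => Sum.elim a b (j : Fin n ⊕ Fin n) ω)
        = IUalloc XA a i := by
      funext ω
      simp only [Function.comp_apply, gA, IUalloc, Sum.elim_inl]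
      congr
    have hBeq : gB ∘ (fun ω (j : T) => Sum.elim a b (j : Fin n ⊕ Fin n) ω)
        = IUalloc XB b i := by
      funext ω
      simp only [Function.comp_apply, gB, IUalloc, Sum.elim_inr]
      congr
    rw [hAeq, hBeq] at key
    exact key
  -- the diagonal has probability zero
  have hdiag : ∀ i : Fin n, P {ω | IUalloc XA a i ω = IUalloc XB b i ω} = 0 := by
    intro i
    refine indep_diag_zero _ _ (hAm i) (hBm i) (hindAB i) XB (ne_of_gt hXB) (hBatom i) ?_ ?_
    · by_cases hi : i ∈ OmegaA wA wB γ
      · have hA0 : P {ω | IUalloc XA a i ω = 0} = 0 := by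
          refine null_of_ae_imp (haNN.and (haPos i hi)) fun ω hω hmem => ?_
          obtain ⟨hω, hpos⟩ := hω
          simp only [Set.mem_setOf_eq, IUalloc] at hmem
          have hS : 0 < ∑ j, a j ω :=
            lt_of_lt_of_le hpos (Finset.single_le_sum (fun j _ => hω j) (Finset.mem_univ i))
          rw [if_pos hS] at hmem
          have hgt : 0 < a i ω * XA / ∑ j, a j ω := div_pos (mul_pos hpos hXA) hS
          linarith
        rw [hA0, zero_mul]
      · have hB0 : P {ω | IUalloc XB b i ω = 0} = 0 := by
          refine null_of_ae_imp (hbNN.and (hbPos i hi)) fun ω hω hmem => ?_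
          obtain ⟨hω, hpos⟩ := hω
          simp only [Set.mem_setOf_eq, IUalloc] at hmem
          have hS : 0 < ∑ j, b j ω :=
            lt_of_lt_of_le hpos (Finset.single_le_sum (fun j _ => hω j) (Finset.mem_univ i))
          rw [if_pos hS] at hmem
          have hgt : 0 < b i ω * XB / ∑ j, b j ω := div_pos (mul_pos hpos hXB) hS
          linarith
        rw [hB0, mul_zero]
    · by_cases hcase : ∃ j, j ≠ i ∧ j ∈ OmegaA wA wB γ
      · obtain ⟨j0, hj0i, hj0Ω⟩ := hcase
        have hAXB : P {ω | IUalloc XA a i ω = XB} = 0 := by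
          refine null_of_ae_imp (haNN.and (haPos j0 hj0Ω)) fun ω hω hmem => ?_
          obtain ⟨hω, hpos⟩ := hω
          simp only [Set.mem_setOf_eq, IUalloc] at hmem
          by_cases hS : 0 < ∑ j, a j ω
          · rw [if_pos hS, div_eq_iff (ne_of_gt hS)] at hmem
            have h2 : a i ω + ∑ j ∈ Finset.univ.erase i, a j ω = ∑ j, a j ω :=
              Finset.add_sum_erase _ (fun j => a j ω) (Finset.mem_univ i)
            have h3 : a j0 ω ≤ ∑ j ∈ Finset.univ.erase i, a j ω :=
              Finset.single_le_sum (fun j _ => hω j)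
                (Finset.mem_erase.mpr ⟨hj0i, Finset.mem_univ j0⟩)
            nlinarith [hω i]
          · rw [if_neg hS] at hmem
            exact absurd hmem.symm (ne_of_gt hXB)
        rw [hAXB, zero_mul]
      · push_neg at hcase
        obtain ⟨j0, hj0i⟩ : ∃ j : Fin n, j ≠ i :=
          Fintype.exists_ne_of_one_lt_card (by simpa using (by omega : 1 < n)) i
        have hj0Ω : j0 ∉ OmegaA wA wB γ := hcase j0 hj0i
        have hBXB : P {ω | IUalloc XB b i ω = XB} = 0 := by
          refine null_of_ae_imp (hbNN.and (hbPos j0 hj0Ω)) fun ω hω hmem => ?_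
          obtain ⟨hω, hpos⟩ := hω
          simp only [Set.mem_setOf_eq, IUalloc] at hmem
          by_cases hS : 0 < ∑ j, b j ω
          · rw [if_pos hS, div_eq_iff (ne_of_gt hS)] at hmem
            have h2 : b i ω + ∑ j ∈ Finset.univ.erase i, b j ω = ∑ j, b j ω :=
              Finset.add_sum_erase _ (fun j => b j ω) (Finset.mem_univ i)
            have h3 : b j0 ω ≤ ∑ j ∈ Finset.univ.erase i, b j ω :=
              Finset.single_le_sum (fun j _ => hω j)
                (Finset.mem_erase.mpr ⟨hj0i, Finset.mem_univ j0⟩)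
            nlinarith [hω i]
          · rw [if_neg hS] at hmem
            exact absurd hmem.symm (ne_of_gt hXB)
        rw [hBXB, mul_zero]
  -- Fubini: the expected payoff against the allocation
  have hFmeasB : ∀ i : Fin n, Measurable fun x : ℝ => P {ω | IUalloc XB b i ω ≤ x} := by
    intro i
    have hmono : Monotone fun x : ℝ => P {ω | IUalloc XB b i ω ≤ x} :=
      fun x y hxy => measure_mono fun ω h => le_trans h hxy
    exact hmono.measurable
  have hfub : ∀ i : Fin n, ∫ ω, (P {ω' | IUalloc XB b i ω' ≤ IUalloc XA a i ω}).toReal ∂P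
      = (P {ω | IUalloc XB b i ω ≤ IUalloc XA a i ω}).toReal := by
    intro i
    have h1 : ∫ ω, (P {ω' | IUalloc XB b i ω' ≤ IUalloc XA a i ω}).toReal ∂P
        = (∫⁻ ω, P {ω' | IUalloc XB b i ω' ≤ IUalloc XA a i ω} ∂P).toReal := by
      apply integral_toReal
      · exact ((hFmeasB i).comp (hAm i)).aemeasurable
      · exact Filter.Eventually.of_forall fun ω => measure_lt_top _ _
    rw [h1]
    congr 1
    have hsle : MeasurableSet {p : ℝ × ℝ | p.2 ≤ p.1} :=
      measurableSet_le measurable_snd measurable_fst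
    have h3 := prod_section (P := P) (IUalloc XB b i) (IUalloc XA a i) (hBm i) (hAm i)
      (hindAB i) _ hsle
    calc ∫⁻ ω, P {ω' | IUalloc XB b i ω' ≤ IUalloc XA a i ω} ∂P
        = ∫⁻ x, P {ω' | IUalloc XB b i ω' ≤ x} ∂(P.map (IUalloc XA a i)) :=
          (lintegral_map (hFmeasB i) (hAm i)).symm
      _ = ∫⁻ x, P {ω | (x, IUalloc XB b i ω) ∈ {p : ℝ × ℝ | p.2 ≤ p.1}}
            ∂(P.map (IUalloc XA a i)) := lintegral_congr fun x => rfl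
      _ = P {ω | (IUalloc XA a i ω, IUalloc XB b i ω) ∈ {p : ℝ × ℝ | p.2 ≤ p.1}} := h3.symm
      _ = P {ω | IUalloc XB b i ω ≤ IUalloc XA a i ω} := rfl
  -- strict versus weak inequality
  have hsplit : ∀ i : Fin n, P {ω | IUalloc XB b i ω ≤ IUalloc XA a i ω}
      = P {ω | IUalloc XB b i ω < IUalloc XA a i ω} := by
    intro i
    apply le_antisymm
    · have hsub : {ω | IUalloc XB b i ω ≤ IUalloc XA a i ω}
          ⊆ {ω | IUalloc XB b i ω < IUalloc XA a i ω}
            ∪ {ω | IUalloc XA a i ω = IUalloc XB b i ω} := by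
        intro ω h
        have h0 : IUalloc XB b i ω ≤ IUalloc XA a i ω := h
        rcases lt_or_eq_of_le h0 with h' | h'
        exacts [Or.inl h', Or.inr h'.symm]
      calc P {ω | IUalloc XB b i ω ≤ IUalloc XA a i ω}
          ≤ P ({ω | IUalloc XB b i ω < IUalloc XA a i ω}
              ∪ {ω | IUalloc XA a i ω = IUalloc XB b i ω}) := measure_mono hsub
        _ ≤ P {ω | IUalloc XB b i ω < IUalloc XA a i ω}
            + P {ω | IUalloc XA a i ω = IUalloc XB b i ω} := measure_union_le _ _
        _ = P {ω | IUalloc XB b i ω < IUalloc XA a i ω} := by rw [hdiag i, add_zero]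
    · exact measure_mono fun ω (h : IUalloc XB b i ω < IUalloc XA a i ω) =>
        (le_of_lt h : IUalloc XB b i ω ≤ IUalloc XA a i ω)
  -- assembling the final chain of inequalities
  set W := ∑ j, wA j with hWdef
  have hW : 0 < W :=
    Finset.sum_pos (fun j _ => lt_of_lt_of_le hwlo (hwA j).1) ⟨⟨0, by omega⟩, Finset.mem_univ _⟩
  have hwANN : ∀ i, (0:ℝ) ≤ wA i := fun i => le_trans hwlo.le (hwA i).1
  have hstep1 : ∀ i : Fin n, α * (P {ω | IUalloc XB b i ω = xA i}).toReal
      + (P {ω | IUalloc XB b i ω < xA i}).toReal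
      ≤ (P {ω | IUalloc XB b i ω ≤ xA i}).toReal := by
    intro i
    have hu : {ω | IUalloc XB b i ω < xA i} ∪ {ω | IUalloc XB b i ω = xA i}
        = {ω | IUalloc XB b i ω ≤ xA i} := by
      ext ω
      simp only [Set.mem_union, Set.mem_setOf_eq]
      exact le_iff_lt_or_eq.symm
    have hd : Disjoint {ω | IUalloc XB b i ω < xA i} {ω | IUalloc XB b i ω = xA i} := by
      rw [Set.disjoint_left]
      intro ω h1 h2
      simp only [Set.mem_setOf_eq] at h1 h2
      rw [h2] at h1
      exact lt_irrefl _ h1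
    have hadd := measure_union (μ := P) hd ((hBm i) (measurableSet_singleton (xA i)))
    rw [hu] at hadd
    have ht1 : (P {ω | IUalloc XB b i ω ≤ xA i}).toReal
        = (P {ω | IUalloc XB b i ω < xA i}).toReal
          + (P {ω | IUalloc XB b i ω = xA i}).toReal := by
      rw [hadd, ENNReal.toReal_add (measure_ne_top _ _) (measure_ne_top _ _)]
    rw [ht1]
    nlinarith [mul_nonneg (sub_nonneg.mpr hα1)
      (ENNReal.toReal_nonneg (a := P {ω | IUalloc XB b i ω = xA i}))]
  have hsum1 : ∑ i, wA i * (α * (P {ω | IUalloc XB b i ω = xA i}).toReal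
        + (P {ω | IUalloc XB b i ω < xA i}).toReal)
      ≤ ∑ i, wA i * (P {ω | IUalloc XB b i ω ≤ xA i}).toReal :=
    Finset.sum_le_sum fun i _ => mul_le_mul_of_nonneg_left (hstep1 i) (hwANN i)
  have hconv : ∀ c : Fin n → ℝ, ∑ i, wA i * c i = W * ∑ i, nv wA i * c i := by
    intro c
    rw [Finset.mul_sum]
    refine Finset.sum_congr rfl fun i _ => ?_
    rw [nv, ← hWdef]
    field_simp
  have hsum2 : ∑ i, wA i * (P {ω | IUalloc XB b i ω ≤ xA i}).toReal
      ≤ (∑ i, wA i * ∫ ω, (P {ω' | IUalloc XB b i ω' ≤ IUalloc XA a i ω}).toReal ∂P)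
        + W * (ε / 2) := by
    rw [hconv, hconv]
    have hmul := mul_le_mul_of_nonneg_left hyp hW.le
    rw [mul_add] at hmul
    linarith
  have hsum3 : ∀ i : Fin n, ∫ ω, (P {ω' | IUalloc XB b i ω' ≤ IUalloc XA a i ω}).toReal ∂P
      = α * (P {ω | IUalloc XA a i ω = IUalloc XB b i ω}).toReal
        + (P {ω | IUalloc XB b i ω < IUalloc XA a i ω}).toReal := by
    intro i
    rw [hfub i, hsplit i, hdiag i]
    simp
  calc ∑ i, wA i * (α * (P {ω | IUalloc XB b i ω = xA i}).toReal
        + (P {ω | IUalloc XB b i ω < xA i}).toReal)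
      ≤ ∑ i, wA i * (P {ω | IUalloc XB b i ω ≤ xA i}).toReal := hsum1
    _ ≤ (∑ i, wA i * ∫ ω, (P {ω' | IUalloc XB b i ω' ≤ IUalloc XA a i ω}).toReal ∂P)
        + W * (ε / 2) := hsum2
    _ = (∑ i, wA i * (α * (P {ω | IUalloc XA a i ω = IUalloc XB b i ω}).toReal
          + (P {ω | IUalloc XB b i ω < IUalloc XA a i ω}).toReal)) + W * (ε / 2) := by
        rw [Finset.sum_congr rfl fun i _ => by rw [hsum3 i]]
    _ ≤ (∑ i, wA i * (α * (P {ω | IUalloc XA a i ω = IUalloc XB b i ω}).toReal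
          + (P {ω | IUalloc XB b i ω < IUalloc XA a i ω}).toReal)) + ε * W := by
        have : W * (ε / 2) ≤ ε * W := by nlinarith
        linarith
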